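/- Every separable metric space X contains a subset S that is dense in X, is a Gδ set (a countable intersection of open sets), and has Hausdorff dimension zero. -/

import Mathlib

open EMetric Filter MeasureTheory Topology ENNReal Set

set_option maxHeartbeats 1000000 in
theorem dense_Gdelta_dimH_zero (X : Type*) [MetricSpace X]
    [TopologicalSpace.SeparableSpace X] :
    ∃ S : Set X, Dense S ∧ IsGδ S ∧ dimH S = 0 := by
  cases isEmpty_or_nonempty X with
  | inl h =>
    refine ⟨Set.univ, dense_univ, IsGδ.univ, ?_⟩
    rw [Set.univ_eq_empty_iff.mpr h, dimH_empty]
  | inr h =>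
    borelize X
    set x : ℕ → X := TopologicalSpace.denseSeq X with hxdef
    have hx : DenseRange x := TopologicalSpace.denseRange_denseSeq X
    set ρ : ℕ → ℕ → ℝ≥0∞ := fun k n => 2⁻¹ * 2⁻¹ ^ ((k + 1) * (n + k + 1)) with hρ
    have h2 : (2 : ℝ≥0∞) * 2⁻¹ = 1 := ENNReal.mul_inv_cancel two_ne_zero ENNReal.ofNat_ne_top
    have hρpos : ∀ k n, 0 < ρ k n := fun k n => by
      rw [hρ]
      exact ENNReal.mul_pos (by simp) (pow_ne_zero _ (by simp))
    have h2ρ : ∀ k n, 2 * ρ k n = 2⁻¹ ^ ((k + 1) * (n + k + 1)) := fun k n => by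
      rw [hρ, ← mul_assoc, h2, one_mul]
    set U : ℕ → Set X := fun k => ⋃ n, EMetric.ball (x n) (ρ k n) with hU
    have hsub : Set.range x ⊆ ⋂ k, U k := by
      rintro _ ⟨n, rfl⟩
      refine Set.mem_iInter.2 fun k => Set.mem_iUnion.2 ⟨n, ?_⟩
      exact EMetric.mem_ball_self (hρpos k n)
    refine ⟨⋂ k, U k, hx.mono hsub, ?_, ?_⟩
    · exact .iInter fun k => (isOpen_iUnion fun n => EMetric.isOpen_ball).isGδ
    · have hdiam : ∀ k n, diam (EMetric.ball (x n) (ρ k n)) ≤ 2⁻¹ ^ ((k + 1) * (n + k + 1)) :=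
        fun k n => (h2ρ k n) ▸ diam_ball
    -- the key measure estimate
      have key : ∀ d : ℝ, 0 < d → μH[d] (⋂ k, U k) = 0 := by
        intro d hd
        have hle := MeasureTheory.Measure.hausdorffMeasure_le_liminf_tsum (X := X) d
          (⋂ k, U k) (l := atTop) (fun k => (2⁻¹ : ℝ≥0∞) ^ k)
          (ENNReal.tendsto_pow_atTop_nhds_zero_of_lt_one (ENNReal.inv_lt_one.2 one_lt_two))
          (fun k n => EMetric.ball (x n) (ρ k n)) ?_ ?_
        · refine le_antisymm (hle.trans ?_) zero_le
          have hbound : ∀ᶠ k in atTop,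
              (∑' n, diam (EMetric.ball (x n) (ρ k n)) ^ d) ≤ (2⁻¹ : ℝ≥0∞) ^ k := by
            filter_upwards [eventually_ge_atTop ⌈1 / d⌉₊] with k hk
            have hk1 : 1 / ((k : ℝ) + 1) ≤ d := by
              have h1 : 1 / d ≤ (k : ℝ) + 1 := by
                calc (1 : ℝ) / d ≤ ⌈1 / d⌉₊ := Nat.le_ceil _
                _ ≤ (k : ℝ) + 1 := by
                    have := Nat.cast_le (α := ℝ).2 hk
                    linarith
              rw [div_le_iff₀ (by positivity)]
              calc (1 : ℝ) = d * (1 / d) := by rw [mul_one_div, div_self hd.ne']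
              _ ≤ d * ((k : ℝ) + 1) := mul_le_mul_of_nonneg_left h1 hd.le
            have hterm : ∀ n : ℕ,
                diam (EMetric.ball (x n) (ρ k n)) ^ d ≤ (2⁻¹ : ℝ≥0∞) ^ (n + (k + 1)) := by
              intro n
              have h01 : (2⁻¹ : ℝ≥0∞) ^ ((k + 1) * (n + k + 1)) ≤ 1 :=
                pow_le_one' (ENNReal.inv_le_one.2 one_le_two) _
              calc diam (EMetric.ball (x n) (ρ k n)) ^ d
                  ≤ ((2⁻¹ : ℝ≥0∞) ^ ((k + 1) * (n + k + 1))) ^ d :=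
                    ENNReal.rpow_le_rpow (hdiam k n) hd.le
                _ ≤ ((2⁻¹ : ℝ≥0∞) ^ ((k + 1) * (n + k + 1))) ^ (1 / ((k : ℝ) + 1)) :=
                    ENNReal.rpow_le_rpow_of_exponent_ge h01 hk1
                _ = (2⁻¹ : ℝ≥0∞) ^ (n + (k + 1)) := by
                    rw [← ENNReal.rpow_natCast (2⁻¹ : ℝ≥0∞) ((k + 1) * (n + k + 1)),
                      ← ENNReal.rpow_mul, ← ENNReal.rpow_natCast (2⁻¹ : ℝ≥0∞) (n + (k + 1))]
                    congr 1
                    push_cast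
                    field_simp
                    ring
            calc (∑' n, diam (EMetric.ball (x n) (ρ k n)) ^ d)
                ≤ ∑' n, (2⁻¹ : ℝ≥0∞) ^ (n + (k + 1)) := ENNReal.tsum_le_tsum hterm
              _ = (∑' n, (2⁻¹ : ℝ≥0∞) ^ n) * (2⁻¹ : ℝ≥0∞) ^ (k + 1) := by
                  simp_rw [pow_add]
                  exact ENNReal.tsum_mul_right
              _ = (2⁻¹ : ℝ≥0∞) ^ k := by
                  rw [ENNReal.tsum_geometric, ENNReal.one_sub_inv_two, inv_inv, pow_succ,
                    ← mul_assoc, mul_comm (2 : ℝ≥0∞) _, mul_assoc, h2, mul_one]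
          calc liminf (fun k => ∑' n, diam (EMetric.ball (x n) (ρ k n)) ^ d) atTop
              ≤ liminf (fun k => (2⁻¹ : ℝ≥0∞) ^ k) atTop := liminf_le_liminf hbound
            _ = 0 := (ENNReal.tendsto_pow_atTop_nhds_zero_of_lt_one (ENNReal.inv_lt_one.2 one_lt_two)).liminf_eq
        · refine Eventually.of_forall fun k n => ?_
          refine (hdiam k n).trans (pow_le_pow_of_le_one zero_le
            (ENNReal.inv_le_one.2 one_le_two) ?_)
          calc k ≤ (k + 1) * 1 := by omega
          _ ≤ (k + 1) * (n + k + 1) := by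
              exact Nat.mul_le_mul_left _ (by omega)
        · exact Eventually.of_forall fun k => Set.iInter_subset _ k
      refine le_antisymm ?_ zero_le
      refine dimH_le fun d' hd' => ?_
      rcases eq_or_lt_of_le (zero_le : 0 ≤ d') with h0 | hpos
      · simp [← h0]
      · rw [key d' (by exact_mod_cast hpos)] at hd'
        exact absurd hd' ENNReal.zero_ne_top
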